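/- Let (a_m) be a real sequence. Then sup_m 5^m |5 a_{m+1} - 3 a_m| < ∞ if and only if there exist a constant A and a sequence (a'_m) with a_m = A (3/5)^m + a'_m and sup_m 5^m |a'_m| < ∞. Moreover, one can choose a'_m so that sup_m 5^m |a'_m| ≤ sup_m 5^m |5 a_{m+1} - 3 a_m|, and then A = lim_{m→∞} (5/3)^m a_m. -/
import Mathlib

lemma key (a : ℕ → ℝ) (C : ℝ) (hC : ∀ m : ℕ, (5:ℝ)^m * |5 * a (m+1) - 3 * a m| ≤ C) :
    ∃ (A : ℝ) (a' : ℕ → ℝ), (∀ m : ℕ, a m = A * ((3:ℝ)/5)^m + a' m) ∧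
        (∀ m : ℕ, (5:ℝ)^m * |a' m| ≤ C) ∧
        Filter.Tendsto (fun m : ℕ => ((5:ℝ)/3)^m * a m) Filter.atTop (nhds A) := by
  set b : ℕ → ℝ := fun m => ((5:ℝ)/3)^m * a m with hb
  have hstep : ∀ n : ℕ, dist (b n) (b (n+1)) ≤ (C/3) * (1/3 : ℝ)^n := by
    intro n
    have h1 : dist (b n) (b (n+1)) = ((5:ℝ)/3)^n / 3 * |5 * a (n+1) - 3 * a n| := by
      rw [Real.dist_eq, abs_sub_comm]
      rw [show b (n+1) - b n = ((5:ℝ)/3)^n / 3 * (5 * a (n+1) - 3 * a n) by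
        simp only [hb, pow_succ]; ring]
      rw [abs_mul, abs_of_nonneg (by positivity)]
    rw [h1]
    have h2 := hC n
    have h5 : (0:ℝ) < 5^n := by positivity
    calc ((5:ℝ)/3)^n / 3 * |5 * a (n+1) - 3 * a n|
        = (1/(3:ℝ))^n / 3 * ((5:ℝ)^n * |5 * a (n+1) - 3 * a n|) := by
          rw [div_pow, div_pow, one_pow]; field_simp
      _ ≤ (1/(3:ℝ))^n / 3 * C := by
          apply mul_le_mul_of_nonneg_left h2 (by positivity)
      _ = (C/3) * (1/3 : ℝ)^n := by ring
  have hr : (1/3 : ℝ) < 1 := by norm_num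
  have hcauchy : CauchySeq b := cauchySeq_of_le_geometric _ _ hr hstep
  obtain ⟨A, hA⟩ := cauchySeq_tendsto_of_complete hcauchy
  have hdist : ∀ n : ℕ, dist (b n) A ≤ (C/3) * (1/3:ℝ)^n / (1 - 1/3) :=
    dist_le_of_le_geometric_of_tendsto _ _ hr hstep hA
  refine ⟨A, fun m => a m - A * ((3:ℝ)/5)^m, fun m => by ring, fun m => ?_, hA⟩
  have h1 : a m - A * ((3:ℝ)/5)^m = ((3:ℝ)/5)^m * (b m - A) := by
    simp only [hb]
    rw [mul_sub, ← mul_assoc, ← mul_pow]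
    norm_num
    ring
  show (5:ℝ)^m * |a m - A * ((3:ℝ)/5)^m| ≤ C
  rw [h1, abs_mul, abs_of_nonneg (by positivity : (0:ℝ) ≤ ((3:ℝ)/5)^m)]
  have h2 := hdist m
  rw [Real.dist_eq] at h2
  have hC0 : 0 ≤ C := le_trans (by positivity) (hC 0)
  calc (5:ℝ)^m * (((3:ℝ)/5)^m * |b m - A|)
      = (3:ℝ)^m * |b m - A| := by rw [div_pow, ← mul_assoc]; field_simp
    _ ≤ (3:ℝ)^m * ((C/3) * (1/3:ℝ)^m / (1 - 1/3)) := by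
        exact mul_le_mul_of_nonneg_left h2 (by positivity)
    _ = C/2 := by rw [div_pow]; field_simp; ring
    _ ≤ C := by linarith

/-- sup_m 5^m |5 a_{m+1} - 3 a_m| < ∞ iff a_m = A (3/5)^m + a'_m with
sup_m 5^m |a'_m| < ∞; moreover the choice can respect the same bound, and then
A = lim (5/3)^m a_m. -/
theorem stmt0 (a : ℕ → ℝ) :
    ((∃ C : ℝ, ∀ m : ℕ, (5:ℝ)^m * |5 * a (m+1) - 3 * a m| ≤ C) ↔
      ∃ (A : ℝ) (a' : ℕ → ℝ), (∀ m : ℕ, a m = A * ((3:ℝ)/5)^m + a' m) ∧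
        ∃ C : ℝ, ∀ m : ℕ, (5:ℝ)^m * |a' m| ≤ C) ∧
    (∀ C : ℝ, (∀ m : ℕ, (5:ℝ)^m * |5 * a (m+1) - 3 * a m| ≤ C) →
      ∃ (A : ℝ) (a' : ℕ → ℝ), (∀ m : ℕ, a m = A * ((3:ℝ)/5)^m + a' m) ∧
        (∀ m : ℕ, (5:ℝ)^m * |a' m| ≤ C) ∧
        Filter.Tendsto (fun m : ℕ => ((5:ℝ)/3)^m * a m) Filter.atTop (nhds A)) := by
  constructor
  · constructor
    · rintro ⟨C, hC⟩
      obtain ⟨A, a', h1, h2, _⟩ := key a C hC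
      exact ⟨A, a', h1, C, h2⟩
    · rintro ⟨A, a', h1, C, h2⟩
      refine ⟨8 * C, fun m => ?_⟩
      have hd : 5 * a (m+1) - 3 * a m = 5 * a' (m+1) - 3 * a' m := by
        rw [h1 m, h1 (m+1), pow_succ]; ring
      rw [hd]
      have hb1 := h2 (m+1)
      have hb2 := h2 m
      rw [pow_succ] at hb1
      have habs : |5 * a' (m+1) - 3 * a' m| ≤ 5 * |a' (m+1)| + 3 * |a' m| := by
        calc |5 * a' (m+1) - 3 * a' m| ≤ |5 * a' (m+1)| + |3 * a' m| := abs_sub _ _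
          _ = 5 * |a' (m+1)| + 3 * |a' m| := by rw [abs_mul, abs_mul]; norm_num
      have h5 : (0:ℝ) < 5^m := by positivity
      nlinarith [abs_nonneg (a' m), abs_nonneg (a' (m+1))]
  · exact fun C hC => key a C hC
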